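/- arXiv:2401.04286 — 4 statements merged into one kernel-verified Lean document; each statement's English description precedes it below -/
import Mathlib

section
/- Let (A, 𝒜) be a measurable space and B a compact metrizable topological space. If m : A × B → ℝ is measurable in the first argument and continuous in the second argument, then there exists a Borel measurable map f̂ : A → B such that for all a ∈ A, m(a, f̂(a)) = sup_{b ∈ B} m(a, b). -/
open MeasureTheory Set Filter Topology

section SelAux

variable {A B : Type*} [MeasurableSpace A] [MetricSpace B] [CompactSpace B] [Nonempty B]
  [MeasurableSpace B] [BorelSpace B]

/-- The minimal value of `e` over the zero set of `u a ·`. -/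
noncomputable def selEfun (u : A → B → ℝ) (e : B → ℝ) (a : A) : ℝ :=
  sInf (e '' {b | u a b = 0})

lemma selEfun_bddBelow {u : A → B → ℝ} {e : B → ℝ} (he0 : ∀ b, 0 ≤ e b) (a : A) :
    BddBelow (e '' {b | u a b = 0}) :=
  ⟨0, by rintro _ ⟨x, -, rfl⟩; exact he0 x⟩

lemma selEfun_exists_min {u : A → B → ℝ} (hcu : ∀ a, Continuous (u a))
    (hat : ∀ a, ∃ b, u a b = 0) {e : B → ℝ} (hce : Continuous e) (he0 : ∀ b, 0 ≤ e b) (a : A) :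
    ∃ b, u a b = 0 ∧ e b = selEfun u e a := by
  have hKc : IsClosed {b | u a b = 0} := isClosed_eq (hcu a) continuous_const
  obtain ⟨b0, hb0, hmin⟩ := hKc.isCompact.exists_isMinOn (hat a) hce.continuousOn
  refine ⟨b0, hb0, le_antisymm ?_ (csInf_le (selEfun_bddBelow he0 a) ⟨b0, hb0, rfl⟩)⟩
  refine le_csInf (Set.Nonempty.image e (hat a)) ?_
  rintro _ ⟨x, hx, rfl⟩
  exact hmin hx

lemma measurable_selEfun {d : ℕ → B} (hd : DenseRange d)
    {u : A → B → ℝ} (hmu : ∀ b, Measurable fun a => u a b) (hcu : ∀ a, Continuous (u a))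
    (hnp : ∀ a b, u a b ≤ 0) (hat : ∀ a, ∃ b, u a b = 0)
    {e : B → ℝ} (hce : Continuous e) (he0 : ∀ b, 0 ≤ e b) {C : ℝ} (hC : ∀ b, e b ≤ C) :
    Measurable (selEfun u e) := by
  have key : ∀ a, selEfun u e a = ⨆ j : ℕ, ⨅ n : ℕ,
      if -(1 / (j + 1 : ℝ)) < u a (d n) then e (d n) else C := by
    intro a
    obtain ⟨b0, hb0, hEb0⟩ := selEfun_exists_min hcu hat hce he0 a
    set g : ℕ → ℕ → ℝ :=
      fun j n => if -(1 / (j + 1 : ℝ)) < u a (d n) then e (d n) else C with hg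
    set I : ℕ → ℝ := fun j => ⨅ n : ℕ, g j n with hI
    have hg0 : ∀ j n, (0:ℝ) ≤ g j n := by
      intro j n
      simp only [hg]
      split
      · exact he0 _
      · exact le_trans (he0 b0) (hC b0)
    have hIbdd : ∀ j, BddBelow (Set.range (g j)) := by
      intro j
      exact ⟨0, by rintro _ ⟨n, rfl⟩; exact hg0 j n⟩
    have claim1 : ∀ j, I j ≤ e b0 := by
      intro j
      have hj : (0:ℝ) < 1 / (j + 1) := by positivity
      refine le_of_forall_pos_le_add fun δ hδ => ?_
      have hV : IsOpen {b | -(1 / (j + 1 : ℝ)) < u a b ∧ e b < e b0 + δ} :=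
        (isOpen_lt continuous_const (hcu a)).inter (isOpen_lt hce continuous_const)
      have hbV : b0 ∈ {b | -(1 / (j + 1 : ℝ)) < u a b ∧ e b < e b0 + δ} := by
        refine ⟨?_, lt_add_of_pos_right _ hδ⟩
        rw [hb0]
        exact neg_lt_zero.mpr hj
      obtain ⟨n, hn⟩ := hd.exists_mem_open hV ⟨b0, hbV⟩
      calc I j ≤ g j n := ciInf_le (hIbdd j) n
        _ = e (d n) := if_pos hn.1
        _ ≤ e b0 + δ := hn.2.le
    have hSbdd : BddAbove (Set.range I) := ⟨e b0, by rintro _ ⟨j, rfl⟩; exact claim1 j⟩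
    have hbj : ∀ j : ℕ, ∃ b, -(1 / (j + 1 : ℝ)) < u a b ∧ e b < I j + 1 / (j + 1) := by
      intro j
      have hj : (0:ℝ) < 1 / (j + 1) := by positivity
      obtain ⟨n, hn⟩ := exists_lt_of_ciInf_lt (lt_add_of_pos_right (I j) hj)
      by_cases hcond : -(1 / (j + 1 : ℝ)) < u a (d n)
      · refine ⟨d n, hcond, ?_⟩
        simp only [hg] at hn
        rw [if_pos hcond] at hn
        exact hn
      · obtain ⟨b1, hb1⟩ := hat a
        simp only [hg] at hn
        rw [if_neg hcond] at hn
        exact ⟨b1, by rw [hb1]; exact neg_lt_zero.mpr hj, lt_of_le_of_lt (hC b1) hn⟩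
    choose bb hbb1 hbb2 using hbj
    obtain ⟨bs, -, φ, hφ, htends⟩ := isCompact_univ.tendsto_subseq (x := bb)
      (fun j => Set.mem_univ _)
    have hφj : ∀ j : ℕ, (1:ℝ) / (φ j + 1) ≤ 1 / (j + 1) := by
      intro j
      have h1 : (j : ℝ) ≤ φ j := Nat.cast_le.mpr hφ.le_apply
      have h2 : (0:ℝ) < j + 1 := by positivity
      exact one_div_le_one_div_of_le h2 (by linarith)
    have hu_bs : u a bs = 0 := by
      refine le_antisymm (hnp a bs) ?_
      have h1 : Tendsto (fun j => u a (bb (φ j))) atTop (𝓝 (u a bs)) :=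
        ((hcu a).continuousAt.tendsto).comp htends
      have h2 : Tendsto (fun j : ℕ => -(1 / (j + 1 : ℝ))) atTop (𝓝 0) := by
        simpa using (tendsto_one_div_add_atTop_nhds_zero_nat (𝕜 := ℝ)).neg
      exact le_of_tendsto_of_tendsto' h2 h1 fun j =>
        le_trans (neg_le_neg (hφj j)) (hbb1 (φ j)).le
    have he_bs : e bs ≤ ⨆ j, I j := by
      have h1 : Tendsto (fun j => e (bb (φ j))) atTop (𝓝 (e bs)) :=
        hce.continuousAt.tendsto.comp htends
      have h2 : Tendsto (fun j : ℕ => (⨆ j, I j) + 1 / (j + 1 : ℝ)) atTop (𝓝 (⨆ j, I j)) := by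
        simpa using tendsto_const_nhds.add (tendsto_one_div_add_atTop_nhds_zero_nat (𝕜 := ℝ))
      refine le_of_tendsto_of_tendsto' h1 h2 fun j => ?_
      calc e (bb (φ j)) ≤ I (φ j) + 1 / (φ j + 1) := (hbb2 (φ j)).le
        _ ≤ (⨆ j, I j) + 1 / (j + 1) := add_le_add (le_ciSup hSbdd (φ j)) (hφj j)
    refine le_antisymm ?_ ((ciSup_le claim1).trans hEb0.le)
    exact le_trans (csInf_le (selEfun_bddBelow he0 a) ⟨bs, hu_bs, rfl⟩) he_bs
  have : selEfun u e = fun a => ⨆ j : ℕ, ⨅ n : ℕ,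
      if -(1 / (j + 1 : ℝ)) < u a (d n) then e (d n) else C := funext key
  rw [this]
  exact Measurable.iSup fun j => Measurable.iInf fun n =>
    Measurable.ite (measurableSet_lt measurable_const (hmu (d n))) measurable_const
      measurable_const

/-- The next function in the lexicographic-minimization recursion. -/
noncomputable def selNext (u : A → B → ℝ) (e : B → ℝ) : A → B → ℝ :=
  fun a b => min (u a b) (selEfun u e a - e b)

lemma selNext_zero_iff {u : A → B → ℝ} (hnp : ∀ a b, u a b ≤ 0)
    {e : B → ℝ} (he0 : ∀ b, 0 ≤ e b) (a : A) (b : B) :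
    selNext u e a b = 0 ↔ u a b = 0 ∧ e b = selEfun u e a := by
  constructor
  · intro h
    have h1 : (0:ℝ) ≤ u a b := by
      rw [← h]; exact min_le_left _ _
    have hu : u a b = 0 := le_antisymm (hnp a b) h1
    have h2 : (0:ℝ) ≤ selEfun u e a - e b := by
      rw [← h]; exact min_le_right _ _
    have h3 : selEfun u e a ≤ e b := csInf_le (selEfun_bddBelow he0 a) ⟨b, hu, rfl⟩
    exact ⟨hu, le_antisymm (by linarith) h3⟩
  · rintro ⟨h1, h2⟩
    simp [selNext, h1, ← h2]

end SelAux

/-- Measurable selection of a maximizer: if `m : A × B → ℝ` is measurable in the first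
argument and continuous in the second, with `B` compact metrizable, then there is a
Borel measurable `f : A → B` with `m a (f a) = ⨆ b, m a b` for all `a`. -/
theorem stmt_0 {A B : Type*} [MeasurableSpace A]
    [TopologicalSpace B] [CompactSpace B] [TopologicalSpace.MetrizableSpace B]
    [Nonempty B] [MeasurableSpace B] [BorelSpace B]
    (m : A → B → ℝ)
    (hmeas : ∀ b : B, Measurable (fun a => m a b))
    (hcont : ∀ a : A, Continuous (m a)) :
    ∃ f : A → B, Measurable f ∧ ∀ a : A, m a (f a) = ⨆ b : B, m a b := by
  letI : MetricSpace B := TopologicalSpace.metrizableSpaceMetric B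
  obtain ⟨d, hd⟩ : ∃ d : ℕ → B, DenseRange d :=
    ⟨TopologicalSpace.denseSeq B, TopologicalSpace.denseRange_denseSeq B⟩
  set e : ℕ → B → ℝ := fun k b => dist b (d k) with he
  have hce : ∀ k, Continuous (e k) := fun k => continuous_id.dist continuous_const
  have he0 : ∀ k b, 0 ≤ e k b := fun k b => dist_nonneg
  obtain ⟨C, hC⟩ : ∃ C : ℝ, ∀ k b, e k b ≤ C :=
    ⟨Metric.diam (Set.univ : Set B), fun k b =>
      Metric.dist_le_diam_of_mem isCompact_univ.isBounded (Set.mem_univ _) (Set.mem_univ _)⟩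
  -- the (measurable) value function
  set M : A → ℝ := fun a => ⨆ n, m a (d n) with hM
  have hMmeas : Measurable M := Measurable.iSup fun n => hmeas (d n)
  have hbm : ∀ a, ∃ b, ∀ b', m a b' ≤ m a b := by
    intro a
    obtain ⟨b, -, hb⟩ := isCompact_univ.exists_isMaxOn univ_nonempty (hcont a).continuousOn
    exact ⟨b, fun b' => hb (Set.mem_univ b')⟩
  choose bm hbm using hbm
  have hMa : ∀ a, M a = m a (bm a) := by
    intro a
    have hbdd : BddAbove (Set.range fun n => m a (d n)) :=
      ⟨m a (bm a), by rintro _ ⟨n, rfl⟩; exact hbm a (d n)⟩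
    refine le_antisymm (ciSup_le fun n => hbm a (d n)) (le_of_forall_pos_le_add fun δ hδ => ?_)
    have hV : IsOpen {b | m a (bm a) - δ < m a b} := isOpen_lt continuous_const (hcont a)
    obtain ⟨n, hn⟩ := hd.exists_mem_open hV ⟨bm a, by simp [hδ]⟩
    have : m a (d n) ≤ M a := le_ciSup hbdd n
    have hn' : m a (bm a) - δ < m a (d n) := hn
    linarith
  have hsup : ∀ a, (⨆ b : B, m a b) = M a := by
    intro a
    rw [hMa a]
    have hG : IsGreatest (Set.range (m a)) (m a (bm a)) :=
      ⟨Set.mem_range_self _, by rintro _ ⟨b, rfl⟩; exact hbm a b⟩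
    exact hG.csSup_eq
  -- the recursive sequence of functions
  set u0 : A → B → ℝ := fun a b => m a b - M a with hu0
  set U : ℕ → A → B → ℝ :=
    fun k => Nat.rec (motive := fun _ => A → B → ℝ) u0 (fun k uk => selNext uk (e k)) k with hUdef
  have hUs : ∀ k, U (k + 1) = selNext (U k) (e k) := fun k => rfl
  have hinv : ∀ k, (∀ b, Measurable fun a => U k a b) ∧ (∀ a, Continuous (U k a)) ∧
      (∀ a b, U k a b ≤ 0) ∧ (∀ a, ∃ b, U k a b = 0) := by
    intro k
    induction k with
    | zero =>
      refine ⟨fun b => (hmeas b).sub hMmeas, fun a => (hcont a).sub continuous_const,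
        fun a b => sub_nonpos.mpr (hMa a ▸ hbm a b), fun a => ⟨bm a, ?_⟩⟩
      show m a (bm a) - M a = 0
      rw [hMa a, sub_self]
    | succ k ih =>
      obtain ⟨ihm, ihc, ihn, iha⟩ := ih
      have hEm : Measurable (selEfun (U k) (e k)) :=
        measurable_selEfun hd ihm ihc ihn iha (hce k) (he0 k) (hC k)
      rw [hUs k]
      refine ⟨fun b => (ihm b).min (hEm.sub measurable_const),
        fun a => (ihc a).min (continuous_const.sub (hce k)),
        fun a b => le_trans (min_le_left _ _) (ihn a b), fun a => ?_⟩
      obtain ⟨b0, hb0, hEb0⟩ := selEfun_exists_min ihc iha (hce k) (he0 k) a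
      exact ⟨b0, by simp [selNext, hb0, ← hEb0]⟩
  have hchar : ∀ k a b, U (k + 1) a b = 0 ↔ U k a b = 0 ∧ e k b = selEfun (U k) (e k) a := by
    intro k a b
    rw [hUs k]
    exact selNext_zero_iff (hinv k).2.2.1 (he0 k) a b
  -- the selection
  have hfex : ∀ a, ∃ b, ∀ k, U k a b = 0 := by
    intro a
    have hZ : ∀ k, IsClosed {b | U k a b = 0} := fun k =>
      isClosed_eq ((hinv k).2.1 a) continuous_const
    have hsub : ∀ k, {b | U (k + 1) a b = 0} ⊆ {b | U k a b = 0} := fun k b hb =>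
      ((hchar k a b).1 hb).1
    obtain ⟨b, hb⟩ := IsCompact.nonempty_iInter_of_sequence_nonempty_isCompact_isClosed
      (fun k => {b | U k a b = 0}) hsub (fun k => (hinv k).2.2.2 a) (hZ 0).isCompact hZ
    exact ⟨b, fun k => Set.mem_iInter.1 hb k⟩
  choose f hf using hfex
  have hfE : ∀ a k, dist (f a) (d k) = selEfun (U k) (e k) a := fun a k =>
    ((hchar k a (f a)).1 (hf a (k + 1))).2
  -- measurability via the embedding into ℝ^ℕ
  set ι : B → ℕ → ℝ := fun b k => dist b (d k) with hι
  have hιcont : Continuous ι := continuous_pi fun k => continuous_id.dist continuous_const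
  have hιinj : Function.Injective ι := by
    intro b b' h
    by_contra hne
    have hr : 0 < dist b b' := dist_pos.mpr hne
    obtain ⟨k, hk⟩ := Metric.denseRange_iff.mp hd b (dist b b' / 2) (by linarith)
    have h2 : dist b' (d k) = dist b (d k) := (congrFun h k).symm
    have h3 := dist_triangle b (d k) b'
    have h4 : dist (d k) b' = dist b' (d k) := dist_comm _ _
    linarith
  have hemb : IsClosedEmbedding ι := hιcont.isClosedEmbedding hιinj
  have hfmeas : Measurable f := by
    have h1 : Measurable (ι ∘ f) := by
      apply measurable_pi_lambda
      intro k
      have h2 : (fun a => (ι ∘ f) a k) = selEfun (U k) (e k) := funext fun a => hfE a k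
      rw [h2]
      exact measurable_selEfun hd (hinv k).1 (hinv k).2.1 (hinv k).2.2.1 (hinv k).2.2.2
        (hce k) (he0 k) (hC k)
    exact hemb.measurableEmbedding.measurable_comp_iff.1 h1
  refine ⟨f, hfmeas, fun a => ?_⟩
  have h0 : m a (f a) - M a = 0 := hf a 0
  rw [hsup a]
  linarith
end

section
/- Let B be a nonempty compact subset of ℝ^ℕ (with the product topology). Then B has a maximum element in the lexicographic (dictionary) order: there exists b* ∈ B such that for every b ∈ B, b ≤_lex b*, where x ≤_lex y iff x = y or x_k < y_k at the first coordinate k where they differ. -/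
/-- A nonempty compact subset of `ℝ^ℕ` (product topology) has a maximum element in the
lexicographic order: there is `b ∈ B` such that every `x ∈ B` satisfies `x ≤_lex b`,
i.e. `x = b` or `x k < b k` at the first coordinate `k` where they differ. -/
theorem stmt_1 (B : Set (ℕ → ℝ)) (hB : IsCompact B) (hne : B.Nonempty) :
    ∃ b ∈ B, ∀ x ∈ B, x = b ∨ ∃ k : ℕ, (∀ j < k, x j = b j) ∧ x k < b k := by
  let T : ℕ → Set (ℕ → ℝ) := fun n =>
    Nat.rec B (fun n Sn => {x ∈ Sn | x n = sSup ((fun f => f n) '' Sn)}) n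
  have hTs : ∀ n, T (n + 1) = {x ∈ T n | x n = sSup ((fun f => f n) '' T n)} := fun n => rfl
  have key : ∀ n, IsCompact (T n) ∧ (T n).Nonempty := by
    intro n
    induction n with
    | zero => exact ⟨hB, hne⟩
    | succ n ih =>
      obtain ⟨hc, hn⟩ := ih
      have hcont : Continuous (fun f : ℕ → ℝ => f n) := continuous_apply n
      obtain ⟨z, hz, hzmax⟩ := hc.exists_isMaxOn hn hcont.continuousOn
      have hbdd : BddAbove ((fun f => f n) '' T n) := (hc.image hcont).bddAbove
      have hsup : sSup ((fun f => f n) '' T n) = z n := by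
        apply le_antisymm
        · apply csSup_le (hn.image _)
          rintro _ ⟨y, hy, rfl⟩
          exact hzmax hy
        · exact le_csSup hbdd ⟨z, hz, rfl⟩
      constructor
      · have : T (n + 1) = T n ∩ {x | x n = sSup ((fun f => f n) '' T n)} := rfl
        rw [this]
        exact hc.inter_right (isClosed_eq (by continuity) continuous_const)
      · exact ⟨z, hz, hsup.symm⟩
  have hsub : ∀ n, T (n + 1) ⊆ T n := fun n x hx => hx.1
  have hinter : (⋂ n, T n).Nonempty :=
    IsCompact.nonempty_iInter_of_sequence_nonempty_isCompact_isClosed T hsub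
      (fun n => (key n).2) (key 0).1 (fun n => (key n).1.isClosed)
  obtain ⟨b, hb⟩ := hinter
  have hbn : ∀ n, b ∈ T n := fun n => Set.mem_iInter.mp hb n
  refine ⟨b, hbn 0, ?_⟩
  intro x hx
  by_cases hxb : x = b
  · exact Or.inl hxb
  · right
    have hex : ∃ k, x k ≠ b k := by
      by_contra h
      push_neg at h
      exact hxb (funext h)
    let k := Nat.find hex
    have hkne : x k ≠ b k := Nat.find_spec hex
    have hagree : ∀ j < k, x j = b j := fun j hj => by
      by_contra h; exact Nat.find_min hex hj h
    -- show x ∈ T k by induction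
    have hxT : ∀ m ≤ k, x ∈ T m := by
      intro m hm
      induction m with
      | zero => exact hx
      | succ m ihm =>
        have hmk : m < k := hm
        have hxm : x ∈ T m := ihm (le_of_lt hmk)
        rw [hTs m]
        refine ⟨hxm, ?_⟩
        have hbm := (hbn (m + 1))
        rw [hTs m] at hbm
        rw [hagree m hmk]
        exact hbm.2
    have hxk : x ∈ T k := hxT k le_rfl
    refine ⟨k, hagree, ?_⟩
    have hbdd : BddAbove ((fun f => f k) '' T k) := ((key k).1.image (continuous_apply k)).bddAbove
    have hle : x k ≤ sSup ((fun f => f k) '' T k) := le_csSup hbdd ⟨x, hxk, rfl⟩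
    have hbk : b k = sSup ((fun f => f k) '' T k) := by
      have := hbn (k + 1); rw [hTs k] at this; exact this.2
    rw [hbk]
    exact lt_of_le_of_ne hle (fun h => hkne (h.trans hbk.symm))
end

section
/- Suppose (X,Y) on ℝ^d × {0,1} has regression function η satisfying the hard margin condition: there exists t₀ > 0 with |η(x) − 1/2| ≥ t₀ for μ_X-almost every x. Let f : ℝ^d → ℝ be measurable with plug-in classifier g_f. Then P(g_f(X) ≠ Y) − L* ≤ (2/t₀) ∫ |η − f|² dμ_X, where L* is the Bayes risk. -/
open MeasureTheory

/-- Hard margin bound: if `|η(x) − 1/2| ≥ t₀ > 0` for `μ_X`-a.e. `x`, then the excess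
risk of the plug-in classifier `g_f` is at most `(2/t₀) ∫ |η − f|² dμ_X`. -/
theorem stmt_11 {d : ℕ} {Ω : Type*} [MeasurableSpace Ω] (P : Measure Ω)
    [IsProbabilityMeasure P]
    (X : Ω → (Fin d → ℝ)) (Y : Ω → ℝ) (hX : Measurable X) (hY : Measurable Y)
    (hY01 : ∀ ω, Y ω = 0 ∨ Y ω = 1)
    (η : (Fin d → ℝ) → ℝ) (hη : Measurable η) (hη01 : ∀ x, 0 ≤ η x ∧ η x ≤ 1)
    (hreg : ∀ s : Set (Fin d → ℝ), MeasurableSet s →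
      ∫ ω in X ⁻¹' s, Y ω ∂P = ∫ x in s, η x ∂(P.map X))
    (t₀ : ℝ) (ht₀ : 0 < t₀)
    (hmargin : ∀ᵐ x ∂(P.map X), t₀ ≤ |η x - 1 / 2|)
    (f : (Fin d → ℝ) → ℝ) (hf : Measurable f) :
    P {ω | (if (1 : ℝ) / 2 ≤ f (X ω) then (1 : ℝ) else 0) ≠ Y ω}
        - P {ω | (if (1 : ℝ) / 2 ≤ η (X ω) then (1 : ℝ) else 0) ≠ Y ω}
      ≤ ENNReal.ofReal (2 / t₀) *
          ∫⁻ x, ENNReal.ofReal (|η x - f x| ^ 2) ∂(P.map X) := by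
  classical
  set μ := P.map X with hμdef
  haveI : IsProbabilityMeasure μ := Measure.isProbabilityMeasure_map hX.aemeasurable
  set A : Set (Fin d → ℝ) := {x | (1:ℝ)/2 ≤ f x} with hAdef
  set B : Set (Fin d → ℝ) := {x | (1:ℝ)/2 ≤ η x} with hBdef
  have hA : MeasurableSet A := measurableSet_le measurable_const hf
  have hB : MeasurableSet B := measurableSet_le measurable_const hη
  have hY1 : MeasurableSet {ω | Y ω = 1} := hY (measurableSet_singleton 1)
  -- integrability of η
  have hIntη : Integrable η μ :=
    (integrable_const (1:ℝ)).mono' hη.aestronglyMeasurable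
      (ae_of_all _ fun x => by
        rcases hη01 x with ⟨h0, h1⟩
        rw [Real.norm_eq_abs, abs_of_nonneg h0]; simpa using h1)
  set h : (Fin d → ℝ) → ℝ := fun x => 1 - 2 * η x with hhdef
  have hInth : Integrable h μ := (integrable_const (1:ℝ)).sub (hIntη.const_mul 2)
  -- step 1 : measure of X∈s, Y=1
  have step1 : ∀ s : Set (Fin d → ℝ), MeasurableSet s →
      (P ((X ⁻¹' s) ∩ {ω | Y ω = 1})).toReal = ∫ x in s, η x ∂μ := by
    intro s hs
    rw [← hreg s hs]
    have : ∀ ω, Y ω = Set.indicator {ω | Y ω = 1} (fun _ => (1:ℝ)) ω := by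
      intro ω
      rcases hY01 ω with hy | hy <;> simp [Set.indicator, hy]
    calc (P ((X ⁻¹' s) ∩ {ω | Y ω = 1})).toReal
        = ∫ ω in (X ⁻¹' s) ∩ {ω | Y ω = 1}, (1:ℝ) ∂P := by simp; rfl
      _ = ∫ ω in X ⁻¹' s, Set.indicator {ω | Y ω = 1} (fun _ => (1:ℝ)) ω ∂P :=
          (setIntegral_indicator hY1).symm
      _ = ∫ ω in X ⁻¹' s, Y ω ∂P := by
          refine setIntegral_congr_fun (hX hs) fun ω _ => (this ω).symm
  -- risk formula
  have risk : ∀ s : Set (Fin d → ℝ), MeasurableSet s →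
      (P ((X ⁻¹' s ∩ {ω | Y ω = 1}ᶜ) ∪ ((X ⁻¹' s)ᶜ ∩ {ω | Y ω = 1}))).toReal
        = (∫ x, η x ∂μ) + ∫ x in s, h x ∂μ := by
    intro s hs
    have hdisj : Disjoint (X ⁻¹' s ∩ {ω | Y ω = 1}ᶜ) ((X ⁻¹' s)ᶜ ∩ {ω | Y ω = 1}) :=
      disjoint_compl_right.mono inf_le_left inf_le_left
    have hm2 : MeasurableSet ((X ⁻¹' s)ᶜ ∩ {ω | Y ω = 1}) := (hX hs).compl.inter hY1
    rw [measure_union hdisj hm2, ENNReal.toReal_add (measure_ne_top _ _) (measure_ne_top _ _)]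
    have e1 : P (X ⁻¹' s ∩ {ω | Y ω = 1}) + P (X ⁻¹' s \ {ω | Y ω = 1}) = P (X ⁻¹' s) :=
      measure_inter_add_diff _ hY1
    have e1' : (P (X ⁻¹' s ∩ {ω | Y ω = 1})).toReal + (P (X ⁻¹' s ∩ {ω | Y ω = 1}ᶜ)).toReal
        = (P (X ⁻¹' s)).toReal := by
      have h' := congrArg ENNReal.toReal e1
      rw [ENNReal.toReal_add (measure_ne_top _ _) (measure_ne_top _ _), Set.diff_eq] at h'
      exact h'
    have e2 : ((X ⁻¹' s)ᶜ ∩ {ω | Y ω = 1}) = (X ⁻¹' sᶜ) ∩ {ω | Y ω = 1} := by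
      rw [Set.preimage_compl]
    have e3 : (P (X ⁻¹' s)).toReal = (μ s).toReal := by
      rw [hμdef, Measure.map_apply hX hs]
    have e4 : ∫ x in sᶜ, η x ∂μ = (∫ x, η x ∂μ) - ∫ x in s, η x ∂μ := by
      have := integral_add_compl hs hIntη
      linarith
    have e5 : ∫ x in s, h x ∂μ = (μ s).toReal - 2 * ∫ x in s, η x ∂μ := by
      rw [hhdef]
      rw [integral_sub (integrableOn_const (μ := μ) (s := s) (C := (1:ℝ)) (measure_ne_top _ _))
        ((hIntη.const_mul 2).integrableOn), integral_const_mul]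
      simp [integral_const]; rfl
    rw [e2, step1 _ hs.compl]
    have := step1 s hs
    rw [e4, e5]
    linarith [e1', e3, this]
  -- event set identities
  have hEA : {ω | (if (1:ℝ)/2 ≤ f (X ω) then (1:ℝ) else 0) ≠ Y ω}
      = (X ⁻¹' A ∩ {ω | Y ω = 1}ᶜ) ∪ ((X ⁻¹' A)ᶜ ∩ {ω | Y ω = 1}) := by
    ext ω
    by_cases hx : (1:ℝ)/2 ≤ f (X ω) <;> rcases hY01 ω with hy | hy <;>
      simp [hAdef, hx, hy]
  have hEB : {ω | (if (1:ℝ)/2 ≤ η (X ω) then (1:ℝ) else 0) ≠ Y ω}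
      = (X ⁻¹' B ∩ {ω | Y ω = 1}ᶜ) ∪ ((X ⁻¹' B)ᶜ ∩ {ω | Y ω = 1}) := by
    ext ω
    by_cases hx : (1:ℝ)/2 ≤ η (X ω) <;> rcases hY01 ω with hy | hy <;>
      simp [hBdef, hx, hy]
  set S : Set (Fin d → ℝ) := (A \ B) ∪ (B \ A) with hSdef
  have hS : MeasurableSet S := (hA.diff hB).union (hB.diff hA)
  -- difference of risks equals ∫_S |h|
  have habs : ∀ x, |h x| ≤ 1 := by
    intro x
    rcases hη01 x with ⟨h0, h1⟩
    rw [hhdef, abs_le]; constructor <;> simp <;> linarith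
  have hIntabs : Integrable (fun x => |h x|) μ := hInth.abs
  have splitA : ∫ x in A, h x ∂μ = (∫ x in A \ B, h x ∂μ) + ∫ x in A ∩ B, h x ∂μ := by
    rw [← setIntegral_union Set.disjoint_sdiff_inter (hA.inter hB)
      hInth.integrableOn hInth.integrableOn, Set.diff_union_inter]
  have splitB : ∫ x in B, h x ∂μ = (∫ x in B \ A, h x ∂μ) + ∫ x in B ∩ A, h x ∂μ := by
    rw [← setIntegral_union Set.disjoint_sdiff_inter (hB.inter hA)
      hInth.integrableOn hInth.integrableOn, Set.diff_union_inter]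
  have eAB : ∫ x in A \ B, h x ∂μ = ∫ x in A \ B, |h x| ∂μ := by
    refine setIntegral_congr_fun (hA.diff hB) fun x hx => ?_
    have hxB : ¬ (1:ℝ)/2 ≤ η x := hx.2
    rw [abs_of_nonneg]; rw [hhdef]; simp; linarith [not_le.mp hxB]
  have eBA : ∫ x in B \ A, h x ∂μ = - ∫ x in B \ A, |h x| ∂μ := by
    rw [← integral_neg]
    refine setIntegral_congr_fun (hB.diff hA) fun x hx => ?_
    have hxB : (1:ℝ)/2 ≤ η x := hx.1
    rw [abs_of_nonpos]; · ring
    · rw [hhdef]; simp; linarith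
  have splitS : ∫ x in S, |h x| ∂μ
      = (∫ x in A \ B, |h x| ∂μ) + ∫ x in B \ A, |h x| ∂μ := by
    rw [hSdef]
    exact setIntegral_union disjoint_sdiff_sdiff (hB.diff hA)
      hIntabs.integrableOn hIntabs.integrableOn
  have hdiff : (∫ x in A, h x ∂μ) - ∫ x in B, h x ∂μ = ∫ x in S, |h x| ∂μ := by
    rw [splitA, splitB, splitS, eAB, eBA, Set.inter_comm B A]; ring
  -- risks
  have rA := risk A hA
  have rB := risk B hB
  set D : ℝ := ∫ x in S, |h x| ∂μ with hDdef
  have hD0 : 0 ≤ D := setIntegral_nonneg hS fun x _ => abs_nonneg _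
  have hkey : P {ω | (if (1:ℝ)/2 ≤ f (X ω) then (1:ℝ) else 0) ≠ Y ω}
      ≤ P {ω | (if (1:ℝ)/2 ≤ η (X ω) then (1:ℝ) else 0) ≠ Y ω} + ENNReal.ofReal D := by
    rw [hEA, hEB]
    rw [← ENNReal.ofReal_toReal (measure_ne_top P _),
        ← ENNReal.ofReal_toReal (measure_ne_top P
          ((X ⁻¹' B ∩ {ω | Y ω = 1}ᶜ) ∪ ((X ⁻¹' B)ᶜ ∩ {ω | Y ω = 1})))]
    rw [rA, rB]
    have : (∫ x, η x ∂μ) + ∫ x in A, h x ∂μ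
        = ((∫ x, η x ∂μ) + ∫ x in B, h x ∂μ) + D := by
      linarith [hdiff]
    rw [this, ENNReal.ofReal_add (rB ▸ ENNReal.toReal_nonneg) hD0]
  -- bound ofReal D
  have hbound : ENNReal.ofReal D ≤ ENNReal.ofReal (2 / t₀) *
      ∫⁻ x, ENNReal.ofReal (|η x - f x| ^ 2) ∂μ := by
    have e6 : ENNReal.ofReal D = ∫⁻ x in S, ENNReal.ofReal (|h x|) ∂μ := by
      rw [hDdef]
      exact ofReal_integral_eq_lintegral_ofReal hIntabs.integrableOn
        (ae_of_all _ fun x => abs_nonneg _)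
    rw [e6]
    have e7 : ∫⁻ x in S, ENNReal.ofReal (|h x|) ∂μ
        ≤ ∫⁻ x in S, ENNReal.ofReal (2 / t₀ * |η x - f x| ^ 2) ∂μ := by
      refine lintegral_mono_ae ?_
      filter_upwards [ae_restrict_of_ae hmargin, ae_restrict_mem hS] with x h1 h2
      refine ENNReal.ofReal_le_ofReal ?_
      have hle : |η x - 1/2| ≤ |η x - f x| := by
        rcases h2 with hx | hx
        · have hf2 : (1:ℝ)/2 ≤ f x := hx.1
          have hη2 : η x < 1/2 := not_le.mp hx.2
          rw [abs_of_nonpos (by linarith), abs_of_nonpos (by linarith)]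
          linarith
        · have hη2 : (1:ℝ)/2 ≤ η x := hx.1
          have hf2 : f x < 1/2 := not_le.mp hx.2
          rw [abs_of_nonneg (by linarith), abs_of_nonneg (by linarith)]
          linarith
      have habs2 : |h x| = 2 * |η x - 1/2| := by
        simp only [hhdef]
        rw [show (1:ℝ) - 2 * η x = -(2 * (η x - 1/2)) by ring, abs_neg,
          abs_mul, abs_two]
      rw [habs2, div_mul_eq_mul_div, le_div_iff₀ ht₀]
      nlinarith [mul_le_mul_of_nonneg_left h1 (abs_nonneg (η x - 1/2)),
        mul_self_le_mul_self (abs_nonneg (η x - 1/2)) hle, abs_nonneg (η x - f x)]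
    refine e7.trans ?_
    calc ∫⁻ x in S, ENNReal.ofReal (2 / t₀ * |η x - f x| ^ 2) ∂μ
        = ∫⁻ x in S, ENNReal.ofReal (2 / t₀) * ENNReal.ofReal (|η x - f x| ^ 2) ∂μ := by
          refine lintegral_congr fun x => ?_
          rw [ENNReal.ofReal_mul (by positivity)]
      _ = ENNReal.ofReal (2 / t₀) * ∫⁻ x in S, ENNReal.ofReal (|η x - f x| ^ 2) ∂μ :=
          lintegral_const_mul' _ _ ENNReal.ofReal_ne_top
      _ ≤ ENNReal.ofReal (2 / t₀) * ∫⁻ x, ENNReal.ofReal (|η x - f x| ^ 2) ∂μ := by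
          gcongr
          exact Measure.restrict_le_self
  calc P {ω | (if (1:ℝ)/2 ≤ f (X ω) then (1:ℝ) else 0) ≠ Y ω}
      - P {ω | (if (1:ℝ)/2 ≤ η (X ω) then (1:ℝ) else 0) ≠ Y ω}
      ≤ ENNReal.ofReal D := tsub_le_iff_right.mpr (by rw [add_comm]; exact hkey)
    _ ≤ _ := hbound
end

section
/- Suppose the regression function η satisfies the Tsybakov noise condition with constants C₀ > 0, α ≥ 0: μ_X(0 < |η(x) − 1/2| ≤ t) ≤ C₀ t^α for all t > 0. Then for any measurable f : ℝ^d → ℝ with plug-in classifier g_f and any 1 ≤ p < ∞, there is a constant C depending only on C₀, α, p such that P(g_f(X) ≠ Y) − L* ≤ C (∫ |η − f|^p dμ_X)^{(1+α)/(p+α)}. -/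
open MeasureTheory
open scoped ENNReal NNReal

lemma risk_repr {Ω β : Type*} [MeasurableSpace Ω] [MeasurableSpace β]
    (P : Measure Ω) [IsProbabilityMeasure P]
    (X : Ω → β) (Y : Ω → ℝ) (hX : Measurable X) (hY : Measurable Y)
    (hY01 : ∀ ω, Y ω = 0 ∨ Y ω = 1)
    (η : β → ℝ)
    (hint : ∀ s : Set β, MeasurableSet s →
      ∫ ω in X ⁻¹' s, Y ω ∂P = ∫ x in s, η x ∂(P.map X))
    (c : β → Prop) [DecidablePred c] (hs : MeasurableSet {x | c x}) :
    (P {ω | (if c (X ω) then (1:ℝ) else 0) ≠ Y ω}).toReal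
      = ((P.map X) {x | c x}).toReal - ∫ x in {x | c x}, η x ∂(P.map X)
        + ∫ x in {x | c x}ᶜ, η x ∂(P.map X) := by
  set s : Set β := {x | c x} with hsdef
  set A : Set Ω := X ⁻¹' s with hA
  set J : Set Ω := {ω | Y ω = 1} with hJ
  have hAm : MeasurableSet A := hX hs
  have hJm : MeasurableSet J := hY (measurableSet_singleton (1:ℝ))
  have hE : {ω | (if c (X ω) then (1:ℝ) else 0) ≠ Y ω} = (A ∩ Jᶜ) ∪ (Aᶜ ∩ J) := by
    ext ω
    rcases hY01 ω with h | h <;> by_cases hc : c (X ω) <;>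
      simp [hA, hJ, Set.mem_preimage, hsdef, hc, h] <;> norm_num
  have hYind : ∀ ω, Y ω = J.indicator (fun _ => (1:ℝ)) ω := by
    intro ω
    rcases hY01 ω with h | h
    · have : ω ∉ J := by simp [hJ, h]
      simp [Set.indicator_of_notMem this, h]
    · have : ω ∈ J := h
      simp [Set.indicator_of_mem this, h]
  have key : ∀ B : Set Ω, MeasurableSet B →
      ∫ ω in B, Y ω ∂P = (P (B ∩ J)).toReal := by
    intro B hB
    calc ∫ ω in B, Y ω ∂P = ∫ ω in B, J.indicator (fun _ => (1:ℝ)) ω ∂P :=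
          setIntegral_congr_fun hB (fun ω _ => hYind ω)
      _ = ∫ ω in B ∩ J, (1:ℝ) ∂P := setIntegral_indicator hJm
      _ = (P (B ∩ J)).toReal := by simp; rfl
  have hmeas : P {ω | (if c (X ω) then (1:ℝ) else 0) ≠ Y ω}
      = P (A ∩ Jᶜ) + P (Aᶜ ∩ J) := by
    rw [hE]
    refine measure_union ?_ (hAm.compl.inter hJm)
    exact Disjoint.mono Set.inter_subset_left Set.inter_subset_left disjoint_compl_right
  have hsplit : P A = P (A ∩ J) + P (A ∩ Jᶜ) := by
    rw [← measure_inter_add_diff A hJm]; rfl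
  have fin : ∀ B : Set Ω, P B ≠ ⊤ := fun B => measure_ne_top P B
  have h1 : (P (A ∩ Jᶜ)).toReal = (P A).toReal - (P (A ∩ J)).toReal := by
    have := congrArg ENNReal.toReal hsplit
    rw [ENNReal.toReal_add (fin _) (fin _)] at this
    linarith
  have h2 : (P (A ∩ J)).toReal = ∫ x in s, η x ∂(P.map X) := by
    rw [← key A hAm, hint s hs]
  have h3 : (P (Aᶜ ∩ J)).toReal = ∫ x in sᶜ, η x ∂(P.map X) := by
    rw [← key Aᶜ hAm.compl, ← hint sᶜ hs.compl]
    rfl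
  have h4 : (P A).toReal = ((P.map X) s).toReal := by
    rw [Measure.map_apply hX hs]
  rw [hmeas, ENNReal.toReal_add (fin _) (fin _), h1, h2, h3, h4]

lemma ennreal_sub_le_ofReal (a b : ℝ≥0∞) (ha : a ≠ ⊤) (hb : b ≠ ⊤) :
    a - b ≤ ENNReal.ofReal (a.toReal - b.toReal) := by
  rcases le_total a b with h | h
  · simp [tsub_eq_zero_of_le h]
  · rw [ENNReal.ofReal_sub _ ENNReal.toReal_nonneg, ENNReal.ofReal_toReal ha,
      ENNReal.ofReal_toReal hb]

lemma pt_bound (u v t p : ℝ) (hp : 1 ≤ p) (ht : 0 < t) (hu : 0 ≤ u) (huv : u ≤ v)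
    (I : ℝ) (hI0 : 0 ≤ I) (hIt : 0 < u → u ≤ t → I = 2 * t) :
    2 * u ≤ I + 2 * t ^ (1 - p) * v ^ p := by
  have hv0 : 0 ≤ v := hu.trans huv
  have htp : 0 ≤ t ^ (1 - p) := Real.rpow_nonneg ht.le _
  have hvp : 0 ≤ v ^ p := Real.rpow_nonneg hv0 _
  rcases eq_or_lt_of_le hu with h0 | hu'
  · nlinarith [mul_nonneg htp hvp]
  rcases le_or_gt u t with hut | hut
  · rw [hIt hu' hut]; nlinarith [mul_nonneg htp hvp]
  · have hvt : t < v := hut.trans_le huv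
    have hv0' : 0 < v := ht.trans hvt
    have h2 : t ^ (p - 1) ≤ v ^ (p - 1) := Real.rpow_le_rpow ht.le hvt.le (by linarith)
    have h3 : t ^ (1 - p) * t ^ (p - 1) = 1 := by
      rw [← Real.rpow_add ht]; norm_num
    have h4 : v ^ p = v * v ^ (p - 1) := by
      have h := (Real.rpow_add hv0' 1 (p - 1)).symm
      rw [Real.rpow_one] at h
      rw [h]; congr 1; ring
    have htpos : 0 < t ^ (p - 1) := Real.rpow_pos_of_pos ht _
    have hstep : t ^ (p - 1) * v ≤ v ^ (p - 1) * v :=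
      mul_le_mul_of_nonneg_right h2 hv0
    calc 2 * u ≤ 2 * v := by linarith
      _ = 2 * (t ^ (1 - p) * t ^ (p - 1)) * v := by rw [h3]; ring
      _ = 2 * t ^ (1 - p) * (t ^ (p - 1) * v) := by ring
      _ ≤ 2 * t ^ (1 - p) * (v ^ (p - 1) * v) := by
          apply mul_le_mul_of_nonneg_left hstep (by linarith)
      _ = 2 * t ^ (1 - p) * v ^ p := by rw [h4]; ring
      _ ≤ I + 2 * t ^ (1 - p) * v ^ p := by linarith


/-- Comparison inequality under the Tsybakov noise condition: for `C₀ > 0`, `α ≥ 0` and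
`1 ≤ p < ∞` there is a constant `C > 0`, depending only on `C₀, α, p`, such that for every
distribution whose regression function `η` satisfies
`μ_X(0 < |η − 1/2| ≤ t) ≤ C₀ t^α` and every measurable `f`, the excess risk of the
plug-in classifier `g_f(x) = 𝟙{f x ≥ 1/2}` is at most
`C (∫ |η − f|^p dμ_X)^{(1+α)/(p+α)}`. -/
theorem stmt_12 (d : ℕ) (C₀ α p : ℝ) (hC₀ : 0 < C₀) (hα : 0 ≤ α) (hp : 1 ≤ p) :
    ∃ C : ℝ, 0 < C ∧
      ∀ (Ω : Type) (_ : MeasurableSpace Ω) (P : Measure Ω), IsProbabilityMeasure P →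
      ∀ (X : Ω → (Fin d → ℝ)) (Y : Ω → ℝ), Measurable X → Measurable Y →
      (∀ ω, Y ω = 0 ∨ Y ω = 1) →
      ∀ η : (Fin d → ℝ) → ℝ, Measurable η → (∀ x, 0 ≤ η x ∧ η x ≤ 1) →
      (∀ s : Set (Fin d → ℝ), MeasurableSet s →
        ∫ ω in X ⁻¹' s, Y ω ∂P = ∫ x in s, η x ∂(P.map X)) →
      (∀ t : ℝ, 0 < t →
        (P.map X) {x | 0 < |η x - 1 / 2| ∧ |η x - 1 / 2| ≤ t}
          ≤ ENNReal.ofReal (C₀ * t ^ α)) →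
      ∀ f : (Fin d → ℝ) → ℝ, Measurable f →
        P {ω | (if (1 : ℝ) / 2 ≤ f (X ω) then (1 : ℝ) else 0) ≠ Y ω}
            - P {ω | (if (1 : ℝ) / 2 ≤ η (X ω) then (1 : ℝ) else 0) ≠ Y ω}
          ≤ ENNReal.ofReal C *
              (∫⁻ x, ENNReal.ofReal (|η x - f x| ^ p) ∂(P.map X)) ^ ((1 + α) / (p + α)) := by
  have hpα : (0:ℝ) < p + α := by linarith
  refine ⟨2 * C₀ + 2, by linarith, ?_⟩
  intro Ω mΩ P hP X Y hX hY hY01 η hη hη01 hint hTsy f hf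
  set μ := P.map X with hμ
  haveI : IsProbabilityMeasure μ := Measure.isProbabilityMeasure_map hX.aemeasurable
  set e := (1 + α) / (p + α) with hedef
  have he : 0 < e := by rw [hedef]; positivity
  set B := ∫⁻ x, ENNReal.ofReal (|η x - f x| ^ p) ∂μ with hBdef
  by_cases hB : B = ⊤
  · rw [hB, ENNReal.top_rpow_of_pos he, ENNReal.mul_top (by
      simp only [ne_eq, ENNReal.ofReal_eq_zero, not_le]; linarith)]
    exact le_top
  -- notation
  set S := {x : Fin d → ℝ | (1:ℝ)/2 ≤ f x} with hSdef
  set T := {x : Fin d → ℝ | (1:ℝ)/2 ≤ η x} with hTdef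
  have hSm : MeasurableSet S := measurableSet_le measurable_const hf
  have hTm : MeasurableSet T := measurableSet_le measurable_const hη
  -- integrability facts
  have hημ : Integrable η μ := by
    refine Integrable.mono' (integrable_const 1) hη.aestronglyMeasurable ?_
    filter_upwards with x
    rw [Real.norm_eq_abs, abs_le]
    exact ⟨by linarith [(hη01 x).1], (hη01 x).2⟩
  have h12 : Integrable (fun x => 1 - 2 * η x) μ := (integrable_const 1).sub (hημ.const_mul 2)
  have h21 : Integrable (fun x => 2 * η x - 1) μ := (hημ.const_mul 2).sub (integrable_const 1)
  have hgm : Measurable (fun x => |η x - f x| ^ p) :=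
    (Real.continuous_rpow_const (by linarith)).measurable.comp (hη.sub hf).abs
  have hgnn : ∀ x, 0 ≤ |η x - f x| ^ p := fun x => Real.rpow_nonneg (abs_nonneg _) _
  have hgint : Integrable (fun x => |η x - f x| ^ p) μ := by
    refine ⟨hgm.aestronglyMeasurable, ?_⟩
    rw [hasFiniteIntegral_iff_ofReal (Filter.Eventually.of_forall hgnn)]
    exact lt_top_iff_ne_top.2 hB
  set Areal := ∫ x, |η x - f x| ^ p ∂μ with hAdef
  have hA0 : 0 ≤ Areal := integral_nonneg hgnn
  have hBA : B = ENNReal.ofReal Areal := by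
    rw [hAdef, ofReal_integral_eq_lintegral_ofReal hgint (Filter.Eventually.of_forall hgnn)]
  -- risk representations
  have hLf := risk_repr P X Y hX hY hY01 η hint (fun x => (1:ℝ)/2 ≤ f x) hSm
  have hLg := risk_repr P X Y hX hY hY01 η hint (fun x => (1:ℝ)/2 ≤ η x) hTm
  rw [← hμ] at hLf hLg
  rw [← hSdef] at hLf
  rw [← hTdef] at hLg
  -- the L-representation
  have riskL : ∀ s : Set (Fin d → ℝ), MeasurableSet s →
      (μ s).toReal - ∫ x in s, η x ∂μ + ∫ x in sᶜ, η x ∂μ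
        = (∫ x in s, (1 - 2 * η x) ∂μ) + ∫ x, η x ∂μ := by
    intro s hs
    have e1 : ∫ x in s, (1:ℝ) ∂μ = (μ s).toReal := by simp; rfl
    have e2 : ∫ x in s, ((1:ℝ) - η x) ∂μ = ∫ x in s, (1:ℝ) ∂μ - ∫ x in s, η x ∂μ :=
      integral_sub (integrableOn_const (measure_lt_top μ s).ne) hημ.integrableOn
    have e3 : ∫ x in s, ((1:ℝ) - 2 * η x + η x) ∂μ
        = ∫ x in s, (1 - 2 * η x) ∂μ + ∫ x in s, η x ∂μ :=
      integral_add h12.integrableOn hημ.integrableOn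
    have e4 : ∫ x in s, ((1:ℝ) - η x) ∂μ = ∫ x in s, ((1:ℝ) - 2 * η x + η x) ∂μ := by
      refine integral_congr_ae (Filter.Eventually.of_forall fun x => ?_)
      ring
    have e5 : ∫ x in s, η x ∂μ + ∫ x in sᶜ, η x ∂μ = ∫ x, η x ∂μ := integral_add_compl hs hημ
    rw [e4, e3] at e2
    linarith
  have hdisj : ∀ s t : Set (Fin d → ℝ), Disjoint (s \ t) (s ∩ t) := by
    intro s t
    rw [Set.disjoint_left]; rintro x ⟨hs, ht⟩ ⟨_, ht'⟩; exact ht ht'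
  have hsplit : ∀ s t : Set (Fin d → ℝ), MeasurableSet s → MeasurableSet t →
      ∫ x in s, (1 - 2 * η x) ∂μ
        = ∫ x in s \ t, (1 - 2 * η x) ∂μ + ∫ x in s ∩ t, (1 - 2 * η x) ∂μ := by
    intro s t hs ht
    conv_lhs => rw [← Set.diff_union_inter s t]
    exact setIntegral_union (hdisj s t) (hs.inter ht) h12.integrableOn h12.integrableOn
  have hneg : ∫ x in T \ S, (2 * η x - 1) ∂μ = - ∫ x in T \ S, (1 - 2 * η x) ∂μ := by
    rw [← integral_neg]
    refine integral_congr_ae (Filter.Eventually.of_forall fun x => ?_)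
    ring
  have hD : (P {ω | (if (1 : ℝ) / 2 ≤ f (X ω) then (1 : ℝ) else 0) ≠ Y ω}).toReal
      - (P {ω | (if (1 : ℝ) / 2 ≤ η (X ω) then (1 : ℝ) else 0) ≠ Y ω}).toReal
      = (∫ x in S \ T, (1 - 2 * η x) ∂μ) + ∫ x in T \ S, (2 * η x - 1) ∂μ := by
    rw [hLf, hLg, riskL S hSm, riskL T hTm, hsplit S T hSm hTm, hsplit T S hTm hSm,
      Set.inter_comm T S, hneg]
    ring
  -- the key bound for every t > 0
  have keyb : ∀ t : ℝ, 0 < t →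
      P {ω | (if (1 : ℝ) / 2 ≤ f (X ω) then (1 : ℝ) else 0) ≠ Y ω}
        - P {ω | (if (1 : ℝ) / 2 ≤ η (X ω) then (1 : ℝ) else 0) ≠ Y ω}
      ≤ ENNReal.ofReal (2 * C₀ * t ^ (1 + α) + 2 * t ^ (1 - p) * Areal) := by
    intro t ht
    set Et := {x : Fin d → ℝ | 0 < |η x - 1 / 2| ∧ |η x - 1 / 2| ≤ t} with hEtdef
    have habs : Measurable fun x => |η x - 1 / 2| := (hη.sub measurable_const).abs
    have hEtm : MeasurableSet Et := by
      rw [hEtdef, Set.setOf_and]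
      exact (measurableSet_lt measurable_const habs).inter (measurableSet_le habs measurable_const)
    set b : (Fin d → ℝ) → ℝ :=
      fun x => Et.indicator (fun _ => 2 * t) x + 2 * t ^ (1 - p) * |η x - f x| ^ p with hbdef
    have htp : (0:ℝ) ≤ t ^ (1 - p) := Real.rpow_nonneg ht.le _
    have hbint : Integrable b μ :=
      ((integrable_const (2 * t)).indicator hEtm).add (hgint.const_mul _)
    have hbnn : ∀ x, 0 ≤ b x := by
      intro x
      have h1' : 0 ≤ Et.indicator (fun _ => 2 * t) x :=
        Set.indicator_nonneg (fun _ _ => by linarith) x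
      have h2' : 0 ≤ 2 * t ^ (1 - p) * |η x - f x| ^ p :=
        mul_nonneg (by linarith) (hgnn x)
      simpa [hbdef] using add_nonneg h1' h2'
    have hindnn : ∀ x, 0 ≤ Et.indicator (fun _ => 2 * t) x :=
      fun x => Set.indicator_nonneg (fun _ _ => by linarith) x
    have hpt1 : ∀ x ∈ S \ T, 1 - 2 * η x ≤ b x := by
      rintro x ⟨hxS, hxT⟩
      have hfx : (1:ℝ)/2 ≤ f x := hxS
      have hηx : η x < 1/2 := not_le.mp hxT
      have hu : |η x - 1 / 2| = 1/2 - η x := by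
        rw [abs_of_neg (by linarith)]; ring
      have hv : 1/2 - η x ≤ |η x - f x| := by
        rw [abs_of_nonpos (by linarith)]; linarith
      have hb := pt_bound (1/2 - η x) (|η x - f x|) t p hp ht (by linarith) hv
        (Et.indicator (fun _ => 2 * t) x) (hindnn x)
        (fun h1 h2 => by
          have hmem : x ∈ Et := ⟨by rw [hu]; linarith, by rw [hu]; linarith⟩
          rw [Set.indicator_of_mem hmem])
      calc 1 - 2 * η x = 2 * (1/2 - η x) := by ring
        _ ≤ _ := hb
    have hpt2 : ∀ x ∈ T \ S, 2 * η x - 1 ≤ b x := by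
      rintro x ⟨hxT, hxS⟩
      have hηx : (1:ℝ)/2 ≤ η x := hxT
      have hfx : f x < 1/2 := not_le.mp hxS
      have hu : |η x - 1 / 2| = η x - 1/2 := abs_of_nonneg (by linarith)
      have hv : η x - 1/2 ≤ |η x - f x| := by
        rw [abs_of_nonneg (by linarith)]; linarith
      have hb := pt_bound (η x - 1/2) (|η x - f x|) t p hp ht (by linarith) hv
        (Et.indicator (fun _ => 2 * t) x) (hindnn x)
        (fun h1 h2 => by
          have hmem : x ∈ Et := ⟨by rw [hu]; linarith, by rw [hu]; linarith⟩
          rw [Set.indicator_of_mem hmem])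
      calc 2 * η x - 1 = 2 * (η x - 1/2) := by ring
        _ ≤ _ := hb
    have hSTm : MeasurableSet (S \ T) := hSm.diff hTm
    have hTSm : MeasurableSet (T \ S) := hTm.diff hSm
    have i1 : ∫ x in S \ T, (1 - 2 * η x) ∂μ ≤ ∫ x in S \ T, b x ∂μ :=
      setIntegral_mono_on h12.integrableOn hbint.integrableOn hSTm hpt1
    have i2 : ∫ x in T \ S, (2 * η x - 1) ∂μ ≤ ∫ x in T \ S, b x ∂μ :=
      setIntegral_mono_on h21.integrableOn hbint.integrableOn hTSm hpt2
    have hdisj2 : Disjoint (S \ T) (T \ S) := by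
      rw [Set.disjoint_left]; rintro x ⟨hs, ht'⟩ ⟨ht'', _⟩; exact ht' ht''
    have i3 : ∫ x in S \ T, b x ∂μ + ∫ x in T \ S, b x ∂μ
        = ∫ x in (S \ T) ∪ (T \ S), b x ∂μ :=
      (setIntegral_union hdisj2 hTSm hbint.integrableOn hbint.integrableOn).symm
    have i4 : ∫ x in (S \ T) ∪ (T \ S), b x ∂μ ≤ ∫ x, b x ∂μ :=
      setIntegral_le_integral hbint (Filter.Eventually.of_forall hbnn)
    have i5 : ∫ x, b x ∂μ = (μ Et).toReal * (2 * t) + 2 * t ^ (1 - p) * Areal := by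
      rw [hbdef]
      rw [integral_add ((integrable_const (2 * t)).indicator hEtm) (hgint.const_mul _),
        integral_indicator_const _ hEtm, integral_const_mul, smul_eq_mul, ← hAdef]; rfl
    have i6 : (μ Et).toReal ≤ C₀ * t ^ α :=
      ENNReal.toReal_le_of_le_ofReal
        (by positivity) (hTsy t ht)
    have htt : t * t ^ α = t ^ (1 + α) := by
      rw [Real.rpow_add ht, Real.rpow_one]
    have hmul : (μ Et).toReal * (2 * t) ≤ 2 * C₀ * t ^ (1 + α) := by
      have := mul_le_mul_of_nonneg_right i6 (by linarith : (0:ℝ) ≤ 2 * t)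
      calc (μ Et).toReal * (2 * t) ≤ C₀ * t ^ α * (2 * t) := this
        _ = 2 * C₀ * (t * t ^ α) := by ring
        _ = 2 * C₀ * t ^ (1 + α) := by rw [htt]
    have hreal : (P {ω | (if (1 : ℝ) / 2 ≤ f (X ω) then (1 : ℝ) else 0) ≠ Y ω}).toReal
        - (P {ω | (if (1 : ℝ) / 2 ≤ η (X ω) then (1 : ℝ) else 0) ≠ Y ω}).toReal
        ≤ 2 * C₀ * t ^ (1 + α) + 2 * t ^ (1 - p) * Areal := by
      rw [hD]; linarith
    calc P {ω | (if (1 : ℝ) / 2 ≤ f (X ω) then (1 : ℝ) else 0) ≠ Y ω}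
        - P {ω | (if (1 : ℝ) / 2 ≤ η (X ω) then (1 : ℝ) else 0) ≠ Y ω}
        ≤ ENNReal.ofReal ((P {ω | (if (1 : ℝ) / 2 ≤ f (X ω) then (1 : ℝ) else 0) ≠ Y ω}).toReal
            - (P {ω | (if (1 : ℝ) / 2 ≤ η (X ω) then (1 : ℝ) else 0) ≠ Y ω}).toReal) :=
          ennreal_sub_le_ofReal _ _ (measure_ne_top _ _) (measure_ne_top _ _)
      _ ≤ _ := ENNReal.ofReal_le_ofReal hreal
  -- conclude
  rcases lt_or_eq_of_le hA0 with hApos | hAzero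
  · -- positive case: optimize t
    set t := Areal ^ (1 / (p + α)) with htdef
    have ht : 0 < t := Real.rpow_pos_of_pos hApos _
    refine (keyb t ht).trans ?_
    have h1 : t ^ (1 + α) = Areal ^ e := by
      rw [htdef, ← Real.rpow_mul hA0]
      congr 1
      rw [hedef]; field_simp
    have h2 : t ^ (1 - p) * Areal = Areal ^ e := by
      rw [htdef, ← Real.rpow_mul hA0, ← Real.rpow_add_one hApos.ne']
      congr 1
      rw [hedef]; field_simp; ring
    have heq : 2 * C₀ * t ^ (1 + α) + 2 * t ^ (1 - p) * Areal = (2 * C₀ + 2) * Areal ^ e := by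
      calc 2 * C₀ * t ^ (1 + α) + 2 * t ^ (1 - p) * Areal
          = 2 * C₀ * (Areal ^ e) + 2 * (t ^ (1 - p) * Areal) := by rw [h1]; ring
        _ = (2 * C₀ + 2) * Areal ^ e := by rw [h2]; ring
    rw [hBA, ENNReal.ofReal_rpow_of_pos hApos, ← ENNReal.ofReal_mul (by linarith)]
    exact ENNReal.ofReal_le_ofReal (le_of_eq heq)
  · -- Areal = 0
    have hzero : ∀ t : ℝ, 0 < t →
        P {ω | (if (1 : ℝ) / 2 ≤ f (X ω) then (1 : ℝ) else 0) ≠ Y ω}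
          - P {ω | (if (1 : ℝ) / 2 ≤ η (X ω) then (1 : ℝ) else 0) ≠ Y ω}
        ≤ ENNReal.ofReal (2 * C₀ * t ^ (1 + α)) := by
      intro t ht
      have := keyb t ht
      rwa [← hAzero, mul_zero, add_zero] at this
    have h1 : Filter.Tendsto (fun t : ℝ => t ^ (1 + α)) (nhdsWithin 0 (Set.Ioi 0)) (nhds 0) := by
      have h := (Real.continuousAt_rpow_const 0 (1 + α) (Or.inr (by linarith))).tendsto
      rw [Real.zero_rpow (by linarith : (1:ℝ) + α ≠ 0)] at h
      exact h.mono_left nhdsWithin_le_nhds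
    have h2 := h1.const_mul (2 * C₀)
    rw [mul_zero] at h2
    have htend : Filter.Tendsto (fun t : ℝ => ENNReal.ofReal (2 * C₀ * t ^ (1 + α)))
        (nhdsWithin 0 (Set.Ioi 0)) (nhds 0) := by
      have := (ENNReal.continuous_ofReal.tendsto 0).comp h2
      rwa [ENNReal.ofReal_zero] at this
    have hle0 : P {ω | (if (1 : ℝ) / 2 ≤ f (X ω) then (1 : ℝ) else 0) ≠ Y ω}
        - P {ω | (if (1 : ℝ) / 2 ≤ η (X ω) then (1 : ℝ) else 0) ≠ Y ω} ≤ 0 :=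
      ge_of_tendsto htend (eventually_mem_nhdsWithin.mono fun t ht => hzero t ht)
    exact hle0.trans zero_le
end
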